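/- Let H be a bipartite graph with parts {v₁,…,v_k} and {w₁,…,w_k}, and let M, M' be perfect matchings of H (regarded as permutations of {1,…,k}). If the symmetric difference of M and M' is a disjoint union of simple cycles C₁,…,C_m whose lengths all satisfy ℓ_i ≡ 2 (mod 4), then sgn(M) = sgn(M'). -/
import Mathlib

/-- **Perfect matchings whose symmetric difference consists of cycles of length
`≡ 2 (mod 4)` have the same sign.**
`E` is a bipartite graph on the parts `{v₁,…,v_k}` and `{w₁,…,w_k}` (the value
`E i j` records the edge `{vᵢ, wⱼ}`).  Perfect matchings are regarded as
permutations `σ` of `Fin k` (the matching `{vᵢ, w_{σ i}}`), and the sign of a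
matching is the sign of the corresponding permutation.  A cycle of the
symmetric difference of the matchings `σ`, `σ'` alternates between edges of the
two matchings; a cycle of length `2·n` in the graph corresponds to a cycle of
length `n` of the permutation `σ⁻¹ * σ'`.  If every cycle of the symmetric
difference has length `≡ 2 (mod 4)` (i.e. `(2·n) % 4 = 2` for every cycle
length `n` of `σ⁻¹ * σ'`), then `sgn σ = sgn σ'`. -/
theorem stmt11 {k : ℕ} (E : Fin k → Fin k → Prop)
    (σ σ' : Equiv.Perm (Fin k))
    (hM : ∀ i, E i (σ i)) (hM' : ∀ i, E i (σ' i))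
    (hcyc : ∀ n ∈ (σ⁻¹ * σ').cycleType, (2 * n) % 4 = 2) :
    Equiv.Perm.sign σ = Equiv.Perm.sign σ' := by
  have h1 : Equiv.Perm.sign (σ⁻¹ * σ') = 1 := by
    rw [Equiv.Perm.sign_of_cycleType]
    have key : ∀ s : Multiset ℕ, (∀ n ∈ s, (2 * n) % 4 = 2) →
        Even (s.sum + Multiset.card s) := by
      intro s
      induction s using Multiset.induction with
      | empty => simp
      | cons a t ih =>
        intro h
        have ha := h a (Multiset.mem_cons_self a t)
        have ht := ih fun n hn => h n (Multiset.mem_cons_of_mem hn)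
        simp only [Multiset.sum_cons, Multiset.card_cons]
        rcases ht with ⟨m, hm⟩
        exact ⟨m + (a + 1) / 2, by omega⟩
    rw [Even.neg_one_pow (key _ hcyc)]
  have := Equiv.Perm.sign.map_mul σ⁻¹ σ'
  rw [h1, Equiv.Perm.sign_inv] at this
  have h2 : Equiv.Perm.sign σ * Equiv.Perm.sign σ = 1 := Int.units_mul_self _
  calc Equiv.Perm.sign σ = Equiv.Perm.sign σ * 1 := by rw [mul_one]
    _ = Equiv.Perm.sign σ * (Equiv.Perm.sign σ * Equiv.Perm.sign σ') := by rw [← this]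
    _ = Equiv.Perm.sign σ' := by rw [← mul_assoc, h2, one_mul]
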